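/- Let v_1,…,v_m ∈ ℂ^n be fixed, and let Ã : H_n(ℂ) → ℝ^{⌊m/2⌋} be the associated map. Suppose there exist constants d, D > 0 and an integer r ∈ {1,…,n} with r > 4D²/d² + 2 such that d·‖X‖_F ≤ (1/m)·‖Ã(X)‖_{ℓ¹} ≤ D·‖X‖_F for all Hermitian X of rank at most r. Then, for every x^s ∈ ℂ^n, there is no nonzero Hermitian matrix H ∈ H_n(ℂ) satisfying simultaneously: Tr(H) ≤ 0, Ã(H) = 0, and x^s(x^s)^* + H ⪰ 0. -/

import Mathlib

open Matrix
open scoped ComplexOrder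

/-- The measurement map `A(X)_k = ⟨v_k v_k^*, X⟩ = Tr(v_k v_k^* X)` (real-valued
on Hermitian matrices). -/
noncomputable def measA {n m : ℕ} (v : Fin m → Fin n → ℂ)
    (X : Matrix (Fin n) (Fin n) ℂ) (k : Fin m) : ℝ :=
  (Matrix.trace ((Matrix.of fun i j => v k i * (starRingEnd ℂ) (v k j)) * X)).re

/-- The map `Ã(X)_j = A(X)_{2j-1} - A(X)_{2j}` (0-indexed: entries `2j` and `2j+1`). -/
noncomputable def tildeA {n m : ℕ} (v : Fin m → Fin n → ℂ)
    (X : Matrix (Fin n) (Fin n) ℂ) (j : Fin (m / 2)) : ℝ :=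
  measA v X ⟨2 * j.val, by have := j.isLt; omega⟩ -
    measA v X ⟨2 * j.val + 1, by have := j.isLt; omega⟩

/-- Frobenius norm of a complex matrix. -/
noncomputable def frob {n : ℕ} (X : Matrix (Fin n) (Fin n) ℂ) : ℝ :=
  Real.sqrt (∑ i, ∑ j, ‖X i j‖ ^ 2)

/-- The rank-one Hermitian matrix `x x^*`. -/
noncomputable def outerC {n : ℕ} (x : Fin n → ℂ) : Matrix (Fin n) (Fin n) ℂ :=
  Matrix.of fun i j => x i * (starRingEnd ℂ) (x j)

open Finset


/-- Block `j` of `Fin K` with block size `s`: indices in `[j*s, (j+1)*s)`. -/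
def blkF (K s j : ℕ) : Finset (Fin K) :=
  (Finset.Ico (j*s) (min ((j+1)*s) K)).attachFin (by intro a ha; simp only [Finset.mem_Ico] at ha; omega)

lemma mem_blkF {K s j : ℕ} {k : Fin K} : k ∈ blkF K s j ↔ j*s ≤ k.val ∧ k.val < (j+1)*s := by
  simp only [blkF, Finset.mem_attachFin, Finset.mem_Ico, lt_min_iff]
  have := k.isLt
  tauto

lemma blkF_disjoint {K s : ℕ} {j1 j2 : ℕ} (h : j1 ≠ j2) :
    Disjoint (blkF K s j1) (blkF K s j2) := by
  rw [Finset.disjoint_left]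
  intro k h1 h2
  rw [mem_blkF] at h1 h2
  rcases Nat.lt_or_ge j1 j2 with hlt | hge
  · have : (j1+1) * s ≤ j2 * s := Nat.mul_le_mul_right s hlt
    omega
  · have hlt : j2 < j1 := lt_of_le_of_ne hge (Ne.symm h)
    have : (j2+1) * s ≤ j1 * s := Nat.mul_le_mul_right s hlt
    omega

lemma blkF_card_le {K s j : ℕ} : (blkF K s j).card ≤ s := by
  rw [blkF, Finset.card_attachFin, Nat.card_Ico]
  have : (j+1)*s = j*s + s := by ring
  omega

lemma blkF_biUnion {K s : ℕ} (hs : 1 ≤ s) :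
    (Finset.range K).biUnion (fun j => blkF K s j) = Finset.univ := by
  ext k
  simp only [Finset.mem_biUnion, Finset.mem_range, Finset.mem_univ, iff_true]
  have h1 := Nat.div_add_mod k.val s
  have h2 : k.val % s < s := Nat.mod_lt _ (by omega)
  refine ⟨k.val / s, ?_, ?_⟩
  · have := Nat.div_le_self k.val s
    have := k.isLt
    omega
  · rw [mem_blkF]
    have h3 : (k.val/s+1)*s = s*(k.val/s) + s := by ring
    have h4 : (k.val/s)*s = s*(k.val/s) := mul_comm _ _
    omega

/-- Key block inequality: for an antitone nonnegative sequence, the sum of the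
Frobenius-type norms of blocks `1, 2, …` is at most `(1/√s)` times the total sum. -/
lemma block_sum_le {K s : ℕ} (hs : 1 ≤ s) (ν : Fin K → ℝ) (hnn : ∀ k, 0 ≤ ν k)
    (hanti : ∀ k l : Fin K, k ≤ l → ν l ≤ ν k) :
    ∑ j ∈ Finset.Ico 1 K, Real.sqrt (∑ k ∈ blkF K s j, ν k ^ 2)
      ≤ (1 / Real.sqrt s) * ∑ k, ν k := by
  have hs0 : (0:ℝ) < Real.sqrt s := Real.sqrt_pos.mpr (by positivity)
  -- per-block bound
  have key : ∀ j, 1 ≤ j → Real.sqrt (∑ k ∈ blkF K s j, ν k ^ 2)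
      ≤ (1 / Real.sqrt s) * ∑ k ∈ blkF K s (j-1), ν k := by
    intro j hj
    rcases Finset.eq_empty_or_nonempty (blkF K s j) with he | ⟨k0, hk0⟩
    · rw [he]
      simp only [Finset.sum_empty, Real.sqrt_zero]
      have : (0:ℝ) ≤ ∑ k ∈ blkF K s (j-1), ν k := Finset.sum_nonneg fun k _ => hnn k
      positivity
    · rw [mem_blkF] at hk0
      have hjj : j - 1 + 1 = j := by omega
      have hmul : (j-1)*s + s = j * s := by
        calc (j-1)*s + s = ((j-1)+1)*s := by ring
          _ = j * s := by rw [hjj]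
      have hmul2 : ((j-1)+1)*s = (j-1)*s + s := by ring
      have hjsK : j * s - 1 < K := by
        have := k0.isLt; omega
      set l : Fin K := ⟨j * s - 1, hjsK⟩ with hl
      have hlval : (l : ℕ) = j * s - 1 := rfl
      have hlmem : l ∈ blkF K s (j-1) := by
        rw [mem_blkF]
        omega
      -- the previous block is full: card = s
      have hfull : s ≤ (blkF K s (j-1)).card := by
        rw [blkF, Finset.card_attachFin, Nat.card_Ico]
        omega
      have hνl : 0 ≤ ν l := hnn l
      have h1 : ∑ k ∈ blkF K s j, ν k ^ 2 ≤ s * ν l ^ 2 := by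
        calc ∑ k ∈ blkF K s j, ν k ^ 2 ≤ ∑ _k ∈ blkF K s j, ν l ^ 2 := by
              apply Finset.sum_le_sum
              intro k hk
              rw [mem_blkF] at hk
              have hlk : l ≤ k := by
                rw [Fin.le_def]
                omega
              have := hanti l k hlk
              have := hnn k
              nlinarith
          _ = (blkF K s j).card * ν l ^ 2 := by rw [Finset.sum_const, nsmul_eq_mul]
          _ ≤ s * ν l ^ 2 := by
              have h3 := blkF_card_le (K := K) (s := s) (j := j)
              have h2 : (0:ℝ) ≤ ν l ^ 2 := sq_nonneg _
              have h4 : ((blkF K s j).card : ℝ) ≤ (s:ℝ) := by exact_mod_cast h3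
              nlinarith
      have h2 : (s:ℝ) * ν l ≤ ∑ k ∈ blkF K s (j-1), ν k := by
        calc (s:ℝ) * ν l ≤ ((blkF K s (j-1)).card : ℝ) * ν l := by
              have : (s:ℝ) ≤ ((blkF K s (j-1)).card : ℝ) := by exact_mod_cast hfull
              nlinarith
          _ = ∑ _k ∈ blkF K s (j-1), ν l := by rw [Finset.sum_const, nsmul_eq_mul]
          _ ≤ ∑ k ∈ blkF K s (j-1), ν k := by
              apply Finset.sum_le_sum
              intro k hk
              rw [mem_blkF] at hk
              apply hanti
              rw [Fin.le_def]
              omega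
      calc Real.sqrt (∑ k ∈ blkF K s j, ν k ^ 2) ≤ Real.sqrt (s * ν l ^ 2) := Real.sqrt_le_sqrt h1
        _ = Real.sqrt s * ν l := by
            rw [Real.sqrt_mul (by positivity), Real.sqrt_sq hνl]
        _ ≤ (1 / Real.sqrt s) * ∑ k ∈ blkF K s (j-1), ν k := by
            rw [div_mul_eq_mul_div, one_mul, le_div_iff₀ hs0]
            calc (Real.sqrt s * ν l) * Real.sqrt s = (Real.sqrt s * Real.sqrt s) * ν l := by ring
              _ = (s:ℝ) * ν l := by rw [Real.mul_self_sqrt (by positivity)]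
              _ ≤ _ := h2
  calc ∑ j ∈ Finset.Ico 1 K, Real.sqrt (∑ k ∈ blkF K s j, ν k ^ 2)
      ≤ ∑ j ∈ Finset.Ico 1 K, (1 / Real.sqrt s) * ∑ k ∈ blkF K s (j-1), ν k := by
        apply Finset.sum_le_sum
        intro j hj
        rw [Finset.mem_Ico] at hj
        exact key j hj.1
    _ = (1 / Real.sqrt s) * ∑ j ∈ Finset.Ico 1 K, ∑ k ∈ blkF K s (j-1), ν k := by
        rw [Finset.mul_sum]
    _ ≤ (1 / Real.sqrt s) * ∑ k, ν k := by
        apply mul_le_mul_of_nonneg_left _ (by positivity)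
        rw [Finset.sum_Ico_eq_sum_range]
        simp only [Nat.add_sub_cancel_left]
        have h1 : ∑ j ∈ Finset.range (K - 1), ∑ k ∈ blkF K s j, ν k
            = ∑ k ∈ (Finset.range (K-1)).biUnion (fun j => blkF K s j), ν k := by
          rw [Finset.sum_biUnion]
          intro j1 _ j2 _ hne
          exact blkF_disjoint hne
        rw [h1]
        apply Finset.sum_le_sum_of_subset_of_nonneg (Finset.subset_univ _)
        intro k _ _
        exact hnn k

-- ## additivity of the measurement maps
lemma measA_sum {n m : ℕ} (v : Fin m → Fin n → ℂ) {ι : Type*} (S : Finset ι)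
    (f : ι → Matrix (Fin n) (Fin n) ℂ) (k : Fin m) :
    measA v (∑ i ∈ S, f i) k = ∑ i ∈ S, measA v (f i) k := by
  unfold measA
  rw [Finset.mul_sum, Matrix.trace_sum, Complex.re_sum]

lemma tildeA_sum {n m : ℕ} (v : Fin m → Fin n → ℂ) {ι : Type*} (S : Finset ι)
    (f : ι → Matrix (Fin n) (Fin n) ℂ) (j : Fin (m / 2)) :
    tildeA v (∑ i ∈ S, f i) j = ∑ i ∈ S, tildeA v (f i) j := by
  unfold tildeA
  rw [measA_sum, measA_sum, Finset.sum_sub_distrib]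

-- ## rank-one pieces from the columns of U
noncomputable def colP {n : ℕ} (U : Matrix (Fin n) (Fin n) ℂ) (i : Fin n) :
    Matrix (Fin n) (Fin n) ℂ :=
  vecMulVec (fun a => U a i) (fun a => (starRingEnd ℂ) (U a i))

noncomputable def eigM {n : ℕ} (U : Matrix (Fin n) (Fin n) ℂ) (lam : Fin n → ℝ)
    (S : Finset (Fin n)) : Matrix (Fin n) (Fin n) ℂ :=
  ∑ i ∈ S, (lam i : ℂ) • colP U i


lemma eigM_apply {n : ℕ} (U : Matrix (Fin n) (Fin n) ℂ) (lam : Fin n → ℝ)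
    (S : Finset (Fin n)) (a b : Fin n) :
    eigM U lam S a b = ∑ i ∈ S, (lam i : ℂ) * (U a i * (starRingEnd ℂ) (U b i)) := by
  unfold eigM colP
  simp [Matrix.sum_apply, Matrix.smul_apply, vecMulVec_apply, smul_eq_mul]

lemma eigM_isHermitian {n : ℕ} (U : Matrix (Fin n) (Fin n) ℂ) (lam : Fin n → ℝ)
    (S : Finset (Fin n)) : (eigM U lam S).IsHermitian := by
  unfold Matrix.IsHermitian
  ext a b
  simp only [Matrix.conjTranspose_apply, eigM_apply]
  rw [show (star (∑ i ∈ S, (lam i : ℂ) * (U b i * (starRingEnd ℂ) (U a i))) : ℂ)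
      = (starRingEnd ℂ) (∑ i ∈ S, (lam i : ℂ) * (U b i * (starRingEnd ℂ) (U a i))) from rfl,
    map_sum]
  apply Finset.sum_congr rfl
  intro i _
  simp only [_root_.map_mul, Complex.conj_conj, Complex.conj_ofReal]
  ring

lemma vmv_mul {n : ℕ} (x y z w : Fin n → ℂ) :
    vecMulVec x y * vecMulVec z w = (∑ a, y a * z a) • vecMulVec x w := by
  ext a b
  simp only [Matrix.mul_apply, vecMulVec_apply, Matrix.smul_apply, smul_eq_mul,
    Finset.sum_mul]
  exact Finset.sum_congr rfl fun c _ => by ring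

lemma trace_vmv {n : ℕ} (x y : Fin n → ℂ) :
    Matrix.trace (vecMulVec x y) = ∑ a, x a * y a := by
  simp [Matrix.trace, Matrix.diag, vecMulVec_apply]

section Ortho
variable {n : ℕ} {U : Matrix (Fin n) (Fin n) ℂ}
variable (hU : ∀ i j, (∑ a, (starRingEnd ℂ) (U a i) * U a j) = if i = j then 1 else 0)
include hU

lemma ortho' (i j : Fin n) :
    (∑ a, U a i * (starRingEnd ℂ) (U a j)) = if i = j then (1:ℂ) else 0 := by
  have h := congrArg (starRingEnd ℂ) (hU i j)
  rw [map_sum] at h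
  simp only [_root_.map_mul, Complex.conj_conj, apply_ite (starRingEnd ℂ),
    _root_.map_one, _root_.map_zero] at h
  exact h

lemma trace_colP_mul (i j : Fin n) :
    Matrix.trace (colP U i * colP U j) = if i = j then (1:ℂ) else 0 := by
  unfold colP
  rw [vmv_mul, Matrix.trace_smul, trace_vmv, hU i j]
  by_cases h : i = j
  · subst h
    simp [ortho' hU i i]
  · simp [h]

end Ortho

lemma sum_mulVec' {n : ℕ} {ι : Type*} (S : Finset ι) (M : ι → Matrix (Fin n) (Fin n) ℂ)
    (w : Fin n → ℂ) : (∑ i ∈ S, M i) *ᵥ w = ∑ i ∈ S, M i *ᵥ w := by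
  classical
  induction S using Finset.induction_on with
  | empty => simp [Matrix.zero_mulVec]
  | insert _ _ h ih => rw [Finset.sum_insert h, Finset.sum_insert h, Matrix.add_mulVec, ih]

lemma dotProduct_sum' {n : ℕ} {ι : Type*} (S : Finset ι) (v : Fin n → ℂ)
    (f : ι → Fin n → ℂ) : v ⬝ᵥ (∑ i ∈ S, f i) = ∑ i ∈ S, v ⬝ᵥ f i := by
  classical
  induction S using Finset.induction_on with
  | empty => simp
  | insert _ _ h ih => rw [Finset.sum_insert h, Finset.sum_insert h, dotProduct_add, ih]

lemma vmv_mulVec {n : ℕ} (x y w : Fin n → ℂ) :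
    vecMulVec x y *ᵥ w = (∑ b, y b * w b) • x := by
  ext a
  simp only [Matrix.mulVec, dotProduct, vecMulVec_apply, Pi.smul_apply, smul_eq_mul,
    Finset.sum_mul]
  exact Finset.sum_congr rfl fun c _ => by ring

lemma frob_sq_herm {n : ℕ} {X : Matrix (Fin n) (Fin n) ℂ} (hX : X.IsHermitian) :
    ∑ a, ∑ b, ‖X a b‖ ^ 2 = (Matrix.trace (X * X)).re := by
  simp only [Matrix.trace, Matrix.diag_apply, Matrix.mul_apply, Complex.re_sum]
  apply Finset.sum_congr rfl
  intro a _
  apply Finset.sum_congr rfl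
  intro b _
  have h := congrFun (congrFun hX.eq b) a
  rw [Matrix.conjTranspose_apply] at h
  rw [← h, Complex.star_def, Complex.mul_conj, Complex.ofReal_re, Complex.sq_norm]

section Ortho2
variable {n : ℕ} {U : Matrix (Fin n) (Fin n) ℂ}
variable (hU : ∀ i j, (∑ a, (starRingEnd ℂ) (U a i) * U a j) = if i = j then 1 else 0)
include hU

lemma trace_eigM_mul_self (lam : Fin n → ℝ) (S : Finset (Fin n)) :
    Matrix.trace (eigM U lam S * eigM U lam S) = ((∑ i ∈ S, lam i ^ 2 : ℝ) : ℂ) := by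
  classical
  have h1 : eigM U lam S * eigM U lam S
      = ∑ i ∈ S, ∑ j ∈ S, ((lam i : ℂ) * (lam j : ℂ)) • (colP U i * colP U j) := by
    unfold eigM
    rw [Finset.sum_mul_sum]
    apply Finset.sum_congr rfl
    intro i _
    apply Finset.sum_congr rfl
    intro j _
    rw [smul_mul_assoc, mul_smul_comm, smul_smul]
  rw [h1, Matrix.trace_sum]
  have h2 : ∀ i ∈ S, Matrix.trace (∑ j ∈ S, ((lam i : ℂ) * (lam j : ℂ)) • (colP U i * colP U j))
      = ((lam i ^ 2 : ℝ) : ℂ) := by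
    intro i hi
    rw [Matrix.trace_sum]
    have : ∀ j ∈ S, Matrix.trace (((lam i : ℂ) * (lam j : ℂ)) • (colP U i * colP U j))
        = if i = j then ((lam i : ℂ) * (lam j : ℂ)) else 0 := by
      intro j _
      rw [Matrix.trace_smul, trace_colP_mul hU, smul_eq_mul, mul_ite, mul_one, mul_zero]
    rw [Finset.sum_congr rfl this, Finset.sum_ite_eq, if_pos hi]
    push_cast
    ring
  rw [Finset.sum_congr rfl h2]
  push_cast
  simp

lemma frob_eigM (lam : Fin n → ℝ) (S : Finset (Fin n)) :
    frob (eigM U lam S) = Real.sqrt (∑ i ∈ S, lam i ^ 2) := by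
  unfold frob
  rw [frob_sq_herm (eigM_isHermitian U lam S), trace_eigM_mul_self hU, Complex.ofReal_re]

lemma trace_eigM (lam : Fin n → ℝ) (S : Finset (Fin n)) :
    Matrix.trace (eigM U lam S) = ((∑ i ∈ S, lam i : ℝ) : ℂ) := by
  unfold eigM
  rw [Matrix.trace_sum]
  have : ∀ i ∈ S, Matrix.trace ((lam i : ℂ) • colP U i) = ((lam i : ℝ) : ℂ) := by
    intro i _
    rw [Matrix.trace_smul, colP, trace_vmv, ortho' hU i i, if_pos rfl, smul_eq_mul, mul_one]
  rw [Finset.sum_congr rfl this]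
  push_cast
  ring

end Ortho2

lemma quad_eigM {n : ℕ} (U : Matrix (Fin n) (Fin n) ℂ) (lam : Fin n → ℝ) (S : Finset (Fin n)) (w : Fin n → ℂ) :
    star w ⬝ᵥ (eigM U lam S *ᵥ w)
      = ∑ i ∈ S, (lam i : ℂ) * Complex.normSq (∑ b, (starRingEnd ℂ) (U b i) * w b) := by
  unfold eigM
  rw [sum_mulVec', dotProduct_sum']
  apply Finset.sum_congr rfl
  intro i _
  rw [smul_mulVec, colP, vmv_mulVec]
  rw [dotProduct_smul, dotProduct_smul]
  have hsw : star w ⬝ᵥ (fun a => U a i)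
      = (starRingEnd ℂ) (∑ b, (starRingEnd ℂ) (U b i) * w b) := by
    rw [map_sum]
    simp only [dotProduct, Pi.star_apply]
    apply Finset.sum_congr rfl
    intro a _
    simp only [_root_.map_mul, Complex.conj_conj]
    exact mul_comm _ _
  rw [hsw, smul_eq_mul, smul_eq_mul, Complex.mul_conj]



lemma rank_eigM_le {n : ℕ} (U : Matrix (Fin n) (Fin n) ℂ) (lam : Fin n → ℝ)
    (S : Finset (Fin n)) : (eigM U lam S).rank ≤ S.card := by
  classical
  set s : Finset (Fin n → ℂ) := S.image (fun i => (fun a => U a i)) with hs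
  have hle : LinearMap.range (eigM U lam S).mulVecLin ≤ Submodule.span ℂ (s : Set (Fin n → ℂ)) := by
    rintro x ⟨w, rfl⟩
    rw [Matrix.mulVecLin_apply]
    unfold eigM
    rw [sum_mulVec']
    apply Submodule.sum_mem
    intro i hi
    rw [smul_mulVec, colP, vmv_mulVec]
    apply Submodule.smul_mem
    apply Submodule.smul_mem
    apply Submodule.subset_span
    exact Finset.mem_coe.mpr (Finset.mem_image_of_mem _ hi)
  calc (eigM U lam S).rank = Module.finrank ℂ (LinearMap.range (eigM U lam S).mulVecLin) := rfl
    _ ≤ Module.finrank ℂ (Submodule.span ℂ (s : Set (Fin n → ℂ))) := Submodule.finrank_mono hle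
    _ ≤ s.card := finrank_span_finset_le_card s
    _ ≤ S.card := Finset.card_image_le

lemma outerC_quad {n : ℕ} (x w : Fin n → ℂ) :
    star w ⬝ᵥ (outerC x *ᵥ w)
      = (Complex.normSq (∑ b, (starRingEnd ℂ) (x b) * w b) : ℂ) := by
  have h : outerC x = vecMulVec x (fun b => (starRingEnd ℂ) (x b)) := rfl
  rw [h, vmv_mulVec, dotProduct_smul]
  have hsw : star w ⬝ᵥ x = (starRingEnd ℂ) (∑ b, (starRingEnd ℂ) (x b) * w b) := by
    rw [map_sum]
    simp only [dotProduct, Pi.star_apply]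
    apply Finset.sum_congr rfl
    intro a _
    simp only [_root_.map_mul, Complex.conj_conj]
    exact mul_comm _ _
  rw [hsw, smul_eq_mul, Complex.mul_conj]

lemma tildeA_zero {n m : ℕ} (v : Fin m → Fin n → ℂ) (j : Fin (m / 2)) :
    tildeA v (0 : Matrix (Fin n) (Fin n) ℂ) j = 0 := by
  have h := tildeA_sum v (∅ : Finset ℕ) (fun _ => (0 : Matrix (Fin n) (Fin n) ℂ)) j
  simpa using h

lemma tildeA_eigM {n m : ℕ} (v : Fin m → Fin n → ℂ) {U : Matrix (Fin n) (Fin n) ℂ}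
    (lam : Fin n → ℝ) (S : Finset (Fin n)) (j : Fin (m / 2)) :
    tildeA v (eigM U lam S) j = ∑ i ∈ S, tildeA v ((lam i : ℂ) • colP U i) j := by
  unfold eigM
  exact tildeA_sum v S _ j

lemma blkF_compl {K s : ℕ} (hs : 1 ≤ s) :
    (Finset.univ : Finset (Fin K)) \ blkF K s 0 = (Finset.Ico 1 K).biUnion (blkF K s) := by
  ext k
  simp only [Finset.mem_sdiff, Finset.mem_univ, true_and, mem_blkF, Finset.mem_biUnion,
    Finset.mem_Ico]
  have h1 := Nat.div_add_mod k.val s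
  have h2 : k.val % s < s := Nat.mod_lt _ (by omega)
  have hK := k.isLt
  constructor
  · intro h
    have hsk : s ≤ k.val := by omega
    refine ⟨k.val / s, ⟨?_, ?_⟩, ?_, ?_⟩
    · have := Nat.one_le_div_iff (by omega : 0 < s) |>.mpr hsk
      omega
    · have := Nat.div_le_self k.val s
      omega
    · have h4 : (k.val/s)*s = s*(k.val/s) := mul_comm _ _
      omega
    · have h3 : (k.val/s+1)*s = s*(k.val/s) + s := by ring
      omega
  · rintro ⟨j, ⟨hj1, _⟩, hj3, _⟩
    intro hcon
    have : 1 * s ≤ j * s := Nat.mul_le_mul_right s hj1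
    omega

/-- If `xs xsᴴ + H ⪰ 0` then `H` cannot have two negative eigenvalues. -/
lemma at_most_one_neg {n : ℕ} {U : Matrix (Fin n) (Fin n) ℂ}
    (hU : ∀ i j, (∑ a, (starRingEnd ℂ) (U a i) * U a j) = if i = j then 1 else 0)
    (lam : Fin n → ℝ) (xs : Fin n → ℂ) {H : Matrix (Fin n) (Fin n) ℂ}
    (hHeig : H = eigM U lam Finset.univ)
    (hpsd : (outerC xs + H).PosSemidef)
    {i j : Fin n} (hij : i ≠ j) (hi : lam i < 0) (hj : lam j < 0) : False := by
  classical
  set ci : ℂ := ∑ b, (starRingEnd ℂ) (xs b) * U b i with hci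
  set cj : ℂ := ∑ b, (starRingEnd ℂ) (xs b) * U b j with hcj
  -- choose coefficients (a, b') not both zero with a * ci + b' * cj = 0
  obtain ⟨a, b', hab, habc⟩ : ∃ a b' : ℂ, ¬(a = 0 ∧ b' = 0) ∧ a * ci + b' * cj = 0 := by
    by_cases hc : ci = 0 ∧ cj = 0
    · exact ⟨1, 0, by simp, by simp [hc.1, hc.2]⟩
    · refine ⟨cj, -ci, ?_, by ring⟩
      intro ⟨h1, h2⟩
      exact hc ⟨by simpa using h2, h1⟩
  set w : Fin n → ℂ := fun b => a * U b i + b' * U b j with hw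
  -- inner products of w against columns
  have hd : ∀ k, (∑ b, (starRingEnd ℂ) (U b k) * w b)
      = a * (if k = i then 1 else 0) + b' * (if k = j then 1 else 0) := by
    intro k
    have h1 : ∀ b, (starRingEnd ℂ) (U b k) * w b
        = a * ((starRingEnd ℂ) (U b k) * U b i) + b' * ((starRingEnd ℂ) (U b k) * U b j) := by
      intro b; simp only [hw]; ring
    rw [Finset.sum_congr rfl (fun b _ => h1 b), Finset.sum_add_distrib,
      ← Finset.mul_sum, ← Finset.mul_sum, hU k i, hU k j]
  -- w is orthogonal to xs
  have hxw : (∑ b, (starRingEnd ℂ) (xs b) * w b) = 0 := by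
    have h1 : ∀ b, (starRingEnd ℂ) (xs b) * w b
        = a * ((starRingEnd ℂ) (xs b) * U b i) + b' * ((starRingEnd ℂ) (xs b) * U b j) := by
      intro b; simp only [hw]; ring
    rw [Finset.sum_congr rfl (fun b _ => h1 b), Finset.sum_add_distrib,
      ← Finset.mul_sum, ← Finset.mul_sum, ← hci, ← hcj, habc]
  -- evaluate the quadratic form
  have hquad := hpsd.dotProduct_mulVec_nonneg w
  rw [Matrix.add_mulVec, dotProduct_add, outerC_quad, hHeig,
    quad_eigM U lam Finset.univ w] at hquad
  rw [hxw] at hquad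
  have hsum : ∑ k, (lam k : ℂ) * (Complex.normSq (∑ b, (starRingEnd ℂ) (U b k) * w b) : ℝ)
      = ((lam i * Complex.normSq a + lam j * Complex.normSq b' : ℝ) : ℂ) := by
    have hv : ∀ k ∈ (Finset.univ : Finset (Fin n)), k ∉ ({i, j} : Finset (Fin n)) →
        (lam k : ℂ) * (Complex.normSq (∑ b, (starRingEnd ℂ) (U b k) * w b) : ℝ) = 0 := by
      intro k _ hk
      simp only [Finset.mem_insert, Finset.mem_singleton, not_or] at hk
      rw [hd k, if_neg hk.1, if_neg hk.2]
      simp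
    rw [← Finset.sum_subset (Finset.subset_univ ({i, j} : Finset (Fin n))) hv]
    rw [Finset.sum_pair hij, hd i, hd j, if_pos rfl, if_pos rfl,
      if_neg hij, if_neg (Ne.symm hij)]
    simp only [mul_one, mul_zero, add_zero, zero_add]
    push_cast
    ring
  rw [hsum] at hquad
  have h0 : (0:ℝ) ≤ Complex.normSq 0 + (lam i * Complex.normSq a + lam j * Complex.normSq b') := by
    have := hquad
    rw [show ((Complex.normSq (0:ℂ) : ℝ) : ℂ) + ((lam i * Complex.normSq a
        + lam j * Complex.normSq b' : ℝ) : ℂ)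
      = ((Complex.normSq (0:ℂ) + (lam i * Complex.normSq a + lam j * Complex.normSq b') : ℝ) : ℂ)
      by push_cast; ring] at this
    exact Complex.zero_le_real.mp this
  simp only [map_zero, zero_add] at h0
  have ha2 : 0 ≤ Complex.normSq a := Complex.normSq_nonneg a
  have hb2 : 0 ≤ Complex.normSq b' := Complex.normSq_nonneg b'
  have hpos : 0 < Complex.normSq a + Complex.normSq b' := by
    rcases not_and_or.mp hab with h | h
    · have := Complex.normSq_pos.mpr h; linarith
    · have := Complex.normSq_pos.mpr h; linarith
  rcases lt_or_ge 0 (Complex.normSq a) with hcase | hcase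
  · nlinarith [mul_neg_of_neg_of_pos hi hcase,
      mul_nonneg (le_of_lt (neg_pos.mpr hj)) hb2]
  · have hb'pos : 0 < Complex.normSq b' := by linarith
    nlinarith [mul_neg_of_neg_of_pos hj hb'pos,
      mul_nonneg (le_of_lt (neg_pos.mpr hi)) ha2]

/-- if `Ã` satisfies the ℓ¹/Frobenius RIP at rank `r > 4D²/d² + 2`,
then for every `x^s` there is no nonzero Hermitian `H` with `Tr H ≤ 0`,
`Ã(H) = 0` and `x^s (x^s)^* + H ⪰ 0`. -/
theorem no_bad_perturbation (n m : ℕ) (v : Fin m → Fin n → ℂ) (d D : ℝ) (r : ℕ)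
    (hd : 0 < d) (hD : 0 < D) (hr1 : 1 ≤ r) (hrn : r ≤ n)
    (hr : (r : ℝ) > 4 * D ^ 2 / d ^ 2 + 2)
    (hRIP : ∀ X : Matrix (Fin n) (Fin n) ℂ, X.IsHermitian → X.rank ≤ r →
      d * frob X ≤ (1 / m) * ∑ j, |tildeA v X j| ∧
      (1 / m) * ∑ j, |tildeA v X j| ≤ D * frob X) :
    ∀ (xs : Fin n → ℂ) (H : Matrix (Fin n) (Fin n) ℂ), H.IsHermitian → H ≠ 0 →
      ¬((Matrix.trace H).re ≤ 0 ∧ (∀ j, tildeA v H j = 0) ∧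
        (outerC xs + H).PosSemidef) := by
  classical
  intro xs H hH hne
  rintro ⟨htr, htA, hpsd⟩
  set U : Matrix (Fin n) (Fin n) ℂ := (hH.eigenvectorUnitary : Matrix (Fin n) (Fin n) ℂ) with hUdef
  set lam : Fin n → ℝ := hH.eigenvalues with hlamdef
  have hUorth : ∀ i j, (∑ a, (starRingEnd ℂ) (U a i) * U a j) = if i = j then 1 else 0 := by
    intro i j
    have h1 : star U * U = 1 := Matrix.mem_unitaryGroup_iff'.mp hH.eigenvectorUnitary.2
    have h2 := congrFun (congrFun h1 i) j
    rw [Matrix.mul_apply] at h2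
    simpa [Matrix.star_apply, Matrix.one_apply] using h2
  have hHeig : H = eigM U lam Finset.univ := by
    have hspec := hH.spectral_theorem
    ext a b
    rw [eigM_apply, hspec, Unitary.conjStarAlgAut_apply, Matrix.mul_apply]
    apply Finset.sum_congr rfl
    intro i _
    rw [Matrix.mul_diagonal, Matrix.star_apply]
    simp only [Function.comp_apply, Complex.star_def]
    rw [show (RCLike.ofReal (lam i) : ℂ) = ((lam i : ℝ) : ℂ) from rfl]
    ring
  -- negative and positive index sets
  set Neg : Finset (Fin n) := Finset.univ.filter (fun i => lam i < 0) with hNegdef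
  set Pos : Finset (Fin n) := Finset.univ.filter (fun i => 0 < lam i) with hPosdef
  have hNegcard : Neg.card ≤ 1 := by
    rw [Finset.card_le_one]
    intro i hi j hj
    by_contra hne'
    simp only [hNegdef, Finset.mem_filter, Finset.mem_univ, true_and] at hi hj
    exact at_most_one_neg hUorth lam xs hHeig hpsd hne' hi hj
  have htrace : ∑ i, lam i ≤ 0 := by
    have h1 : (Matrix.trace H).re = ∑ i, lam i := by
      rw [hHeig, trace_eigM hUorth, Complex.ofReal_re]
    linarith [h1 ▸ htr]
  have hPosNeg : ∑ i ∈ Pos, lam i ≤ - ∑ i ∈ Neg, lam i := by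
    have h1 := Finset.sum_filter_add_sum_filter_not Finset.univ (fun i => 0 < lam i) lam
    have h2 : ∑ i ∈ Neg, lam i = ∑ i ∈ Finset.univ.filter (fun i => ¬ 0 < lam i), lam i := by
      apply Finset.sum_subset
      · intro i hi
        simp only [hNegdef, Finset.mem_filter, Finset.mem_univ, true_and] at hi ⊢
        linarith
      · intro i hi hni
        simp only [hNegdef, Finset.mem_filter, Finset.mem_univ, true_and, not_lt] at hi hni
        linarith
    rw [← h2] at h1
    linarith
  rcases Finset.eq_empty_or_nonempty Neg with hNegE | ⟨i0, hi0⟩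
  · -- no negative eigenvalue ⇒ H = 0
    have hallz : ∀ i, lam i = 0 := by
      intro i
      have hnneg : ¬ lam i < 0 := by
        intro hlt
        have : i ∈ Neg := by simp [hNegdef, hlt]
        rw [hNegE] at this
        exact absurd this (Finset.notMem_empty i)
      by_contra hne0
      have hpos : 0 < lam i := lt_of_le_of_ne (not_lt.mp hnneg) (Ne.symm hne0)
      have hiP : i ∈ Pos := by simp [hPosdef, hpos]
      have h3 : lam i ≤ ∑ i ∈ Pos, lam i := by
        apply Finset.single_le_sum _ hiP
        intro k hk
        simp only [hPosdef, Finset.mem_filter, Finset.mem_univ, true_and] at hk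
        linarith
      rw [hNegE] at hPosNeg
      simp only [Finset.sum_empty, neg_zero] at hPosNeg
      linarith
    apply hne
    rw [hHeig]
    unfold eigM
    apply Finset.sum_eq_zero
    intro i _
    rw [hallz i]
    simp
  · -- exactly one negative eigenvalue i0
    have hlami0 : lam i0 < 0 := by
      simp only [hNegdef, Finset.mem_filter, Finset.mem_univ, true_and] at hi0
      exact hi0
    have hNegsing : Neg = {i0} := by
      apply Finset.eq_singleton_iff_unique_mem.mpr
      exact ⟨hi0, fun j hj => Finset.card_le_one.mp hNegcard j hj i0 hi0⟩
    set μ : ℝ := -lam i0 with hμdef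
    have hμ : 0 < μ := by simp only [hμdef]; linarith
    have hTrPos : ∑ i ∈ Pos, lam i ≤ μ := by
      rw [hNegsing, Finset.sum_singleton] at hPosNeg
      linarith
    -- r ≥ 3 and block size s
    have hDd : 0 < 4 * D ^ 2 / d ^ 2 := by positivity
    have hr3 : 3 ≤ r := by
      have h1 : (2:ℝ) < (r:ℝ) := by linarith
      have h2 : 2 < r := by exact_mod_cast h1
      omega
    set s : ℕ := r - 1 with hsdef
    have hs1 : 1 ≤ s := by omega
    have hspos : (0:ℝ) < (s:ℝ) := by exact_mod_cast Nat.lt_of_lt_of_le Nat.zero_lt_one hs1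
    -- enumerate Pos in decreasing order of lam
    set K : ℕ := Pos.card with hKdef
    have hcard : Pos.card = K := hKdef.symm
    set g : Fin K → Fin n := fun k => ((Pos.orderIsoOfFin hcard k : {x // x ∈ Pos}) : Fin n)
      with hgdef
    have hg_mem : ∀ k, g k ∈ Pos := fun k => (Pos.orderIsoOfFin hcard k).2
    have hg_inj : Function.Injective g := by
      intro k l h
      exact (Pos.orderIsoOfFin hcard).injective (Subtype.ext h)
    set σ : Equiv.Perm (Fin K) := Tuple.sort (fun k => -(lam (g k))) with hσdef
    have hmono := Tuple.monotone_sort (fun k => -(lam (g k)))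
    set e : Fin K → Fin n := fun k => g (σ k) with hedef
    have he_mem : ∀ k, e k ∈ Pos := fun k => hg_mem _
    have he_inj : Function.Injective e := hg_inj.comp σ.injective
    have hanti : ∀ k l : Fin K, k ≤ l → lam (e l) ≤ lam (e k) := by
      intro k l hkl
      have h1 := hmono hkl
      simp only [Function.comp_apply] at h1
      simp only [hedef]
      linarith
    have he_image : Finset.univ.image e = Pos := by
      apply Finset.eq_of_subset_of_card_le
      · intro i hi
        obtain ⟨k, _, rfl⟩ := Finset.mem_image.mp hi
        exact he_mem k
      · rw [Finset.card_image_of_injective _ he_inj, Finset.card_univ, Fintype.card_fin]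
    have he_pos : ∀ k, 0 ≤ lam (e k) := by
      intro k
      have := he_mem k
      simp only [hPosdef, Finset.mem_filter, Finset.mem_univ, true_and] at this
      linarith
    -- the distinguished set S0
    set S0 : Finset (Fin n) := (blkF K s 0).image e ∪ Neg with hS0def
    have hi0S0 : i0 ∈ S0 := by
      apply Finset.mem_union_right
      rw [hNegsing]
      exact Finset.mem_singleton_self i0
    have hcardS0 : S0.card ≤ r := by
      calc S0.card ≤ ((blkF K s 0).image e).card + Neg.card := Finset.card_union_le _ _
        _ ≤ s + 1 := add_le_add (le_trans Finset.card_image_le blkF_card_le) hNegcard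
        _ = r := by omega
    have hrankA : (eigM U lam S0).rank ≤ r := le_trans (rank_eigM_le U lam S0) hcardS0
    have hRIPlow := (hRIP (eigM U lam S0) (eigM_isHermitian U lam S0) hrankA).1
    have hfrobA : μ ≤ frob (eigM U lam S0) := by
      rw [frob_eigM hUorth]
      have h1 : lam i0 ^ 2 ≤ ∑ i ∈ S0, lam i ^ 2 :=
        Finset.single_le_sum (fun i _ => sq_nonneg (lam i)) hi0S0
      calc μ = |lam i0| := by rw [hμdef, abs_of_neg hlami0]
        _ = Real.sqrt (lam i0 ^ 2) := (Real.sqrt_sq_eq_abs _).symm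
        _ ≤ _ := Real.sqrt_le_sqrt h1
    -- per-coordinate identity
    have hcoord : ∀ jc : Fin (m/2), tildeA v (eigM U lam S0) jc
        = - ∑ jb ∈ Finset.Ico 1 K, tildeA v (eigM U lam ((blkF K s jb).image e)) jc := by
      intro jc
      have h0 : ∑ i, tildeA v ((lam i : ℂ) • colP U i) jc = 0 := by
        rw [← tildeA_eigM v lam Finset.univ jc, ← hHeig]
        exact htA jc
      have hsplit : ∑ i ∈ Finset.univ \ S0, tildeA v ((lam i : ℂ) • colP U i) jc
          + ∑ i ∈ S0, tildeA v ((lam i : ℂ) • colP U i) jc = 0 := by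
        rw [Finset.sum_sdiff (Finset.subset_univ S0)]
        exact h0
      have hA : tildeA v (eigM U lam S0) jc
          = ∑ i ∈ S0, tildeA v ((lam i : ℂ) • colP U i) jc := tildeA_eigM v lam S0 jc
      have hPos1 : Pos \ (blkF K s 0).image e ⊆ Finset.univ \ S0 := by
        intro i hi
        rw [Finset.mem_sdiff] at hi ⊢
        refine ⟨Finset.mem_univ _, ?_⟩
        rw [hS0def, Finset.mem_union]
        rintro (h | h)
        · exact hi.2 h
        · have h1 := hi.1
          simp only [hPosdef, Finset.mem_filter, Finset.mem_univ, true_and] at h1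
          simp only [hNegdef, Finset.mem_filter, Finset.mem_univ, true_and] at h
          linarith
      have hzero : ∀ i ∈ Finset.univ \ S0, i ∉ Pos \ (blkF K s 0).image e →
          tildeA v ((lam i : ℂ) • colP U i) jc = 0 := by
        intro i hi hni
        have hiS0 : i ∉ S0 := (Finset.mem_sdiff.mp hi).2
        have hiB0 : i ∉ (blkF K s 0).image e := fun h =>
          hiS0 (by rw [hS0def]; exact Finset.mem_union_left _ h)
        have hiNeg : i ∉ Neg := fun h =>
          hiS0 (by rw [hS0def]; exact Finset.mem_union_right _ h)
        have hiPos : i ∉ Pos := by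
          intro h
          exact hni (Finset.mem_sdiff.mpr ⟨h, hiB0⟩)
        have hlam0 : lam i = 0 := by
          simp only [hPosdef, Finset.mem_filter, Finset.mem_univ, true_and, not_lt] at hiPos
          simp only [hNegdef, Finset.mem_filter, Finset.mem_univ, true_and, not_lt] at hiNeg
          linarith
        have hz : (lam i : ℂ) • colP U i = 0 := by rw [hlam0]; simp
        rw [hz, tildeA_zero]
      have hP1 : ∑ i ∈ Finset.univ \ S0, tildeA v ((lam i : ℂ) • colP U i) jc
          = ∑ jb ∈ Finset.Ico 1 K, tildeA v (eigM U lam ((blkF K s jb).image e)) jc := by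
        rw [← Finset.sum_subset hPos1 hzero]
        have himg : Pos \ (blkF K s 0).image e
            = ((Finset.Ico 1 K).biUnion (blkF K s)).image e := by
          rw [← blkF_compl hs1, Finset.image_sdiff _ _ he_inj, he_image]
        rw [himg, Finset.sum_image (fun x _ y _ h => he_inj h),
          Finset.sum_biUnion (fun x _ y _ hxy => blkF_disjoint hxy)]
        apply Finset.sum_congr rfl
        intro jb _
        rw [tildeA_eigM, Finset.sum_image (fun x _ y _ h => he_inj h)]
      linarith [hA, hsplit, hP1]
    -- the chain of inequalities
    have hchain : (1 / (m:ℝ)) * ∑ jc, |tildeA v (eigM U lam S0) jc|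
        ≤ D * ((1 / Real.sqrt s) * μ) := by
      have h1 : ∀ jc, |tildeA v (eigM U lam S0) jc|
          ≤ ∑ jb ∈ Finset.Ico 1 K, |tildeA v (eigM U lam ((blkF K s jb).image e)) jc| := by
        intro jc
        rw [hcoord jc, abs_neg]
        exact Finset.abs_sum_le_sum_abs _ _
      have h2 : (1 / (m:ℝ)) * ∑ jc, |tildeA v (eigM U lam S0) jc|
          ≤ ∑ jb ∈ Finset.Ico 1 K,
            (1 / (m:ℝ)) * ∑ jc, |tildeA v (eigM U lam ((blkF K s jb).image e)) jc| := by
        rw [← Finset.mul_sum]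
        apply mul_le_mul_of_nonneg_left _ (by positivity)
        calc ∑ jc, |tildeA v (eigM U lam S0) jc|
            ≤ ∑ jc, ∑ jb ∈ Finset.Ico 1 K,
              |tildeA v (eigM U lam ((blkF K s jb).image e)) jc| :=
              Finset.sum_le_sum (fun jc _ => h1 jc)
          _ = _ := Finset.sum_comm
      have h3 : ∀ jb ∈ Finset.Ico 1 K,
          (1 / (m:ℝ)) * ∑ jc, |tildeA v (eigM U lam ((blkF K s jb).image e)) jc|
          ≤ D * Real.sqrt (∑ k ∈ blkF K s jb, lam (e k) ^ 2) := by
        intro jb _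
        have hrk : (eigM U lam ((blkF K s jb).image e)).rank ≤ r := by
          apply le_trans (rank_eigM_le _ _ _)
          apply le_trans Finset.card_image_le
          apply le_trans blkF_card_le
          omega
        have h4 := (hRIP _ (eigM_isHermitian U lam ((blkF K s jb).image e)) hrk).2
        rw [frob_eigM hUorth, Finset.sum_image (fun x _ y _ h => he_inj h)] at h4
        exact h4
      have h5 : ∑ jb ∈ Finset.Ico 1 K, Real.sqrt (∑ k ∈ blkF K s jb, lam (e k) ^ 2)
          ≤ (1 / Real.sqrt s) * ∑ k, lam (e k) :=
        block_sum_le hs1 (fun k => lam (e k)) he_pos (fun k l h => hanti k l h)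
      have h6 : ∑ k : Fin K, lam (e k) = ∑ i ∈ Pos, lam i := by
        rw [← he_image, Finset.sum_image (fun x _ y _ h => he_inj h)]
      calc (1 / (m:ℝ)) * ∑ jc, |tildeA v (eigM U lam S0) jc|
          ≤ ∑ jb ∈ Finset.Ico 1 K,
            (1 / (m:ℝ)) * ∑ jc, |tildeA v (eigM U lam ((blkF K s jb).image e)) jc| := h2
        _ ≤ ∑ jb ∈ Finset.Ico 1 K, D * Real.sqrt (∑ k ∈ blkF K s jb, lam (e k) ^ 2) :=
            Finset.sum_le_sum h3
        _ = D * ∑ jb ∈ Finset.Ico 1 K, Real.sqrt (∑ k ∈ blkF K s jb, lam (e k) ^ 2) := by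
            rw [Finset.mul_sum]
        _ ≤ D * ((1 / Real.sqrt s) * ∑ k, lam (e k)) :=
            mul_le_mul_of_nonneg_left h5 hD.le
        _ ≤ D * ((1 / Real.sqrt s) * μ) := by
            apply mul_le_mul_of_nonneg_left _ hD.le
            apply mul_le_mul_of_nonneg_left _ (by positivity)
            rw [h6]
            exact hTrPos
    -- conclusion
    have hs0 : (0:ℝ) < Real.sqrt s := Real.sqrt_pos.mpr hspos
    have hfinal : d * μ ≤ (D * (1 / Real.sqrt s)) * μ := by
      calc d * μ ≤ d * frob (eigM U lam S0) := mul_le_mul_of_nonneg_left hfrobA hd.le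
        _ ≤ (1 / (m:ℝ)) * ∑ jc, |tildeA v (eigM U lam S0) jc| := hRIPlow
        _ ≤ D * ((1 / Real.sqrt s) * μ) := hchain
        _ = (D * (1 / Real.sqrt s)) * μ := by ring
    have h7 : d ≤ D * (1 / Real.sqrt s) := le_of_mul_le_mul_right hfinal hμ
    have h8 : d * Real.sqrt s ≤ D := by
      calc d * Real.sqrt s ≤ (D * (1 / Real.sqrt s)) * Real.sqrt s :=
          mul_le_mul_of_nonneg_right h7 hs0.le
        _ = D := by field_simp
    have hds : 0 ≤ d * Real.sqrt s := mul_nonneg hd.le hs0.le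
    have h9' : (d * Real.sqrt s) * (d * Real.sqrt s) ≤ D * D := mul_le_mul h8 h8 hds hD.le
    have h9 : d ^ 2 * (s:ℝ) ≤ D ^ 2 := by
      nlinarith [Real.mul_self_sqrt hspos.le, h9']
    have h10 : ((s:ℕ):ℝ) = (r:ℝ) - 1 := by
      rw [hsdef]
      push_cast [Nat.cast_sub hr1]
      ring
    have h11 : (s:ℝ) ≤ D ^ 2 / d ^ 2 := by
      rw [le_div_iff₀ (by positivity : (0:ℝ) < d ^ 2)]
      linarith
    have h12 : 0 ≤ D ^ 2 / d ^ 2 := by positivity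
    have h13 : 4 * D ^ 2 / d ^ 2 = 4 * (D ^ 2 / d ^ 2) := by ring
    linarith
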